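/- Let p be an odd prime and let n ≥ 2 be an integer with prime factorization n = p^{a₀} · p₁^{a₁} ⋯ p_t^{a_t}, where p₁, …, p_t are distinct primes different from p, a₀ ≥ 0 and a_i ≥ 1 for 1 ≤ i ≤ t. Then the number of integers ℓ with 0 < ℓ < n and ℓ^{p−1} + ℓ^{p−2} + … + ℓ + 1 ≡ 0 (mod n) equals (p−1)^t if a₀ ≤ 1 and p divides p_i − 1 for every i = 1, …, t, and equals 0 otherwise. -/

import Mathlib

open Finset

noncomputable def cnt (p m : ℕ) : ℕ :=
  Nat.card {x : ZMod m // ∑ j ∈ Finset.range p, x ^ j = 0}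

lemma map_fS {R S : Type*} [CommRing R] [CommRing S] (g : R →+* S) (p : ℕ) (x : R) :
    ∑ j ∈ Finset.range p, (g x) ^ j = g (∑ j ∈ Finset.range p, x ^ j) := by
  rw [map_sum]
  simp [map_pow]

lemma cnt_mul (p m k : ℕ) (h : Nat.Coprime m k) :
    cnt p (m * k) = cnt p m * cnt p k := by
  have e := ZMod.chineseRemainder h
  rw [cnt, cnt, cnt, ← Nat.card_prod]
  apply Nat.card_congr
  calc {x : ZMod (m * k) // ∑ j ∈ Finset.range p, x ^ j = 0}
      ≃ {y : ZMod m × ZMod k // ∑ j ∈ Finset.range p, y ^ j = 0} := by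
        refine e.toEquiv.subtypeEquiv fun x => ?_
        rw [show (e.toEquiv x) = (e : ZMod (m*k) →+* ZMod m × ZMod k) x from rfl,
          map_fS]
        constructor
        · intro hx; rw [hx, map_zero]
        · intro hx; exact (map_eq_zero_iff _ e.injective).mp hx
    _ ≃ {y : ZMod m × ZMod k //
          (∑ j ∈ Finset.range p, y.1 ^ j = 0) ∧ (∑ j ∈ Finset.range p, y.2 ^ j = 0)} := by
        refine Equiv.subtypeEquivRight fun y => ?_
        have h1 : ∑ j ∈ Finset.range p, y.1 ^ j
            = (RingHom.fst (ZMod m) (ZMod k)) (∑ j ∈ Finset.range p, y ^ j) :=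
          map_fS (RingHom.fst (ZMod m) (ZMod k)) p y
        have h2 : ∑ j ∈ Finset.range p, y.2 ^ j
            = (RingHom.snd (ZMod m) (ZMod k)) (∑ j ∈ Finset.range p, y ^ j) :=
          map_fS (RingHom.snd (ZMod m) (ZMod k)) p y
        rw [h1, h2]
        constructor
        · intro hy; rw [hy]; simp
        · rintro ⟨hy1, hy2⟩
          exact Prod.ext hy1 hy2
    _ ≃ _ := Equiv.subtypeProdEquivProd
          (p := fun a : ZMod m => ∑ j ∈ Finset.range p, a ^ j = 0)
          (q := fun b : ZMod k => ∑ j ∈ Finset.range p, b ^ j = 0)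

lemma cnt_one (p : ℕ) : cnt p 1 = 1 := by
  rw [cnt, Nat.card_eq_one_iff_unique]
  constructor
  · exact ⟨fun a b => Subtype.ext (Subsingleton.elim _ _)⟩
  · exact ⟨0, Subsingleton.elim _ _⟩
lemma map_fS' {R S : Type*} [CommRing R] [CommRing S] (g : R →+* S) (p : ℕ) (x : R) :
    ∑ j ∈ Finset.range p, (g x) ^ j = g (∑ j ∈ Finset.range p, x ^ j) := by
  rw [map_sum]; simp [map_pow]

lemma fS_zero_iff_p (p : ℕ) (hp : p.Prime) (x : ZMod p) :
    ∑ j ∈ Finset.range p, x ^ j = 0 ↔ x = 1 := by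
  haveI : Fact p.Prime := ⟨hp⟩
  constructor
  · intro h
    have h1 : (∑ j ∈ Finset.range p, x ^ j) * (x - 1) = x ^ p - 1 := geom_sum_mul x p
    rw [h, zero_mul, ZMod.pow_card] at h1
    exact sub_eq_zero.mp h1.symm
  · rintro rfl
    simp [Finset.sum_const, Finset.card_range]

lemma no_sol_p_sq (p : ℕ) (hp : p.Prime) (hodd : Odd p) (y : ZMod (p ^ 2)) :
    ∑ j ∈ Finset.range p, y ^ j ≠ 0 := by
  haveI : Fact p.Prime := ⟨hp⟩
  haveI : NeZero (p ^ 2) := ⟨pow_ne_zero 2 hp.ne_zero⟩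
  intro h
  set g := ZMod.castHom (dvd_pow_self p (two_ne_zero)) (ZMod p) with hg
  have hy1 : g y = 1 := by
    apply (fS_zero_iff_p p hp (g y)).mp
    rw [map_fS' g p y, h, map_zero]
  -- p ∣ (y - 1).val
  have hval : ((y - 1).val : ZMod p) = 0 := by
    have : ((y - 1).val : ZMod p) = g (y - 1) := by
      rw [hg, ZMod.castHom_apply, ← ZMod.natCast_val]
    rw [this, map_sub, hy1, map_one, sub_self]
  obtain ⟨m, hm⟩ := (ZMod.natCast_eq_zero_iff _ _).mp hval
  have hy : y = 1 + (p : ZMod (p ^ 2)) * (m : ZMod (p ^ 2)) := by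
    have : ((y - 1).val : ZMod (p ^ 2)) = y - 1 := ZMod.natCast_zmod_val _
    rw [hm] at this
    push_cast at this
    linear_combination -this
  have hpp : (p : ZMod (p ^ 2)) * (p : ZMod (p ^ 2)) = 0 := by
    rw [← Nat.cast_mul, ZMod.natCast_eq_zero_iff]
    rw [pow_two]
  set c := (m : ZMod (p ^ 2))
  have key : ∀ j : ℕ, (1 + (p : ZMod (p ^ 2)) * c) ^ j = 1 + (j : ZMod (p ^ 2)) * ((p : ZMod (p ^ 2)) * c) := by
    intro j
    induction j with
    | zero => simp
    | succ j ih =>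
      rw [pow_succ (1 + (p : ZMod (p ^ 2)) * c) j, ih]
      push_cast
      linear_combination ((j : ZMod (p^2)) * c ^ 2) * hpp
  have hS : ∑ j ∈ Finset.range p, y ^ j = (p : ZMod (p ^ 2)) := by
    rw [hy]
    have : ∀ j ∈ Finset.range p, (1 + (p : ZMod (p ^ 2)) * c) ^ j
        = 1 + (j : ZMod (p ^ 2)) * ((p : ZMod (p ^ 2)) * c) := fun j _ => key j
    rw [Finset.sum_congr rfl this, Finset.sum_add_distrib]
    have h1 : ∑ _j ∈ Finset.range p, (1 : ZMod (p ^ 2)) = (p : ZMod (p ^ 2)) := by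
      simp
    have h2 : ∑ j ∈ Finset.range p, (j : ZMod (p ^ 2)) * ((p : ZMod (p ^ 2)) * c) = 0 := by
      rw [← Finset.sum_mul]
      have h3 : ∑ j ∈ Finset.range p, (j : ZMod (p ^ 2)) = ((∑ j ∈ Finset.range p, j : ℕ) : ZMod (p ^ 2)) := by
        push_cast; rfl
      have h4 : p ∣ ∑ j ∈ Finset.range p, j := by
        have hg2 : (∑ i ∈ Finset.range p, i) * 2 = p * (p - 1) := Finset.sum_range_id_mul_two p
        have hdd : p ∣ (∑ i ∈ Finset.range p, i) * 2 := hg2 ▸ Dvd.intro _ rfl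
        have hcop : Nat.Coprime p 2 := by
          exact Nat.coprime_two_right.mpr hodd
        exact Nat.Coprime.dvd_of_dvd_mul_right hcop hdd
      obtain ⟨S', hS'⟩ := h4
      rw [h3, hS']
      push_cast
      linear_combination ((S' : ZMod (p^2)) * c) * hpp
    rw [h1, h2, add_zero]
  rw [hS] at h
  have : p ^ 2 ∣ p := (ZMod.natCast_eq_zero_iff _ _).mp h
  have hle := Nat.le_of_dvd hp.pos this
  nlinarith [hp.two_le]
lemma cnt_q_aux (p q a : ℕ) (hp : p.Prime) (hq : q.Prime) (hqp : q ≠ p)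
    (ha : 1 ≤ a) :
    Nat.card {x : ZMod (q ^ a) // ∑ j ∈ Finset.range p, x ^ j = 0}
      = if p ∣ q - 1 then p - 1 else 0 := by
  haveI : Fact p.Prime := ⟨hp⟩
  haveI : Fact q.Prime := ⟨hq⟩
  haveI : NeZero (q ^ a) := ⟨pow_ne_zero a hq.ne_zero⟩
  set G := (ZMod (q ^ a))ˣ
  have hdvd : q ∣ q ^ a := dvd_pow_self q (by omega)
  set φ := ZMod.unitsMap hdvd with hφ
  have hsurj : Function.Surjective φ := ZMod.unitsMap_surjective hdvd
  have hcardG : Nat.card G = q ^ (a - 1) * (q - 1) := by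
    rw [Nat.card_eq_fintype_card, ZMod.card_units_eq_totient,
      Nat.totient_prime_pow hq (by omega)]
  have hcardG' : Nat.card (ZMod q)ˣ = q - 1 := by
    rw [Nat.card_eq_fintype_card, ZMod.card_units_eq_totient, Nat.totient_prime hq]
  have hker : Nat.card φ.ker = q ^ (a - 1) := by
    have h1 : Nat.card G = Nat.card (G ⧸ φ.ker) * Nat.card φ.ker :=
      Subgroup.card_eq_card_quotient_mul_card_subgroup φ.ker
    have h2 : Nat.card (G ⧸ φ.ker) = Nat.card (ZMod q)ˣ :=
      Nat.card_congr (QuotientGroup.quotientKerEquivOfSurjective φ hsurj).toEquiv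
    rw [h2, hcardG', hcardG] at h1
    have hq1 : 0 < q - 1 := by have := hq.two_le; omega
    have h3 : (q - 1) * Nat.card φ.ker = (q - 1) * q ^ (a - 1) := by
      rw [← h1]; ring
    exact Nat.eq_of_mul_eq_mul_left hq1 h3
  have hkerpow : ∀ u : G, u ∈ φ.ker → u ^ (q ^ (a - 1)) = 1 := by
    intro u hu
    have h1 : (⟨u, hu⟩ : φ.ker) ^ Nat.card φ.ker = 1 := pow_card_eq_one'
    rw [hker] at h1
    simpa using congrArg (Subtype.val) h1
  have hpq : ¬ p ∣ q ^ (a - 1) := by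
    intro hd
    exact hqp ((Nat.prime_dvd_prime_iff_eq hp hq).mp (hp.dvd_of_dvd_pow hd)).symm
  have hkertriv : ∀ u : G, u ∈ φ.ker → u ^ p = 1 → u = 1 := by
    intro u hu hup
    have h1 : orderOf u ∣ p := orderOf_dvd_of_pow_eq_one hup
    have h2 : orderOf u ∣ q ^ (a - 1) := orderOf_dvd_of_pow_eq_one (hkerpow u hu)
    rcases (Nat.Prime.eq_one_or_self_of_dvd hp _ h1) with h | h
    · exact orderOf_eq_one_iff.mp h
    · exact absurd (h ▸ h2) hpq
  -- units of order p give solutions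
  have hsol : ∀ u : G, u ^ p = 1 → u ≠ 1 →
      ∑ j ∈ Finset.range p, ((u : ZMod (q ^ a))) ^ j = 0 := by
    intro u hup hu1
    have hφu : φ u ≠ 1 := fun hk => hu1 (hkertriv u hk hup)
    have hcast : (ZMod.castHom hdvd (ZMod q)) (u : ZMod (q ^ a)) ≠ 1 := by
      intro hc
      apply hφu
      apply Units.ext
      rw [hφ]
      simpa [ZMod.unitsMap] using hc
    set x := (u : ZMod (q ^ a)) with hx
    have hunit : IsUnit (x - 1) := by
      have heq : (((x - 1).val : ℕ) : ZMod q) = (ZMod.castHom hdvd (ZMod q)) (x - 1) := by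
        rw [ZMod.castHom_apply, ← ZMod.natCast_val]
      have hv : (((x - 1).val : ℕ) : ZMod q) ≠ 0 := by
        rw [heq, map_sub, map_one]
        intro hz
        exact hcast (by linear_combination hz)
      have hnd : ¬ q ∣ (x - 1).val := fun hd => hv ((ZMod.natCast_eq_zero_iff _ _).mpr hd)
      have hcop : Nat.Coprime ((x - 1).val) (q ^ a) :=
        Nat.Coprime.pow_right a (((Nat.Prime.coprime_iff_not_dvd hq).mpr hnd).symm)
      have := (ZMod.isUnit_iff_coprime ((x - 1).val) (q ^ a)).mpr hcop
      rwa [ZMod.natCast_zmod_val] at this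
    have hxp : x ^ p = 1 := by
      rw [hx, ← Units.val_pow_eq_pow_val, hup, Units.val_one]
    have hgeq : (∑ j ∈ Finset.range p, x ^ j) * (x - 1) = 0 * (x - 1) := by
      rw [geom_sum_mul, hxp, zero_mul, sub_self]
    exact (hunit.mul_left_inj).mp hgeq
  -- solutions give units of order p
  have e1 : Nat.card {x : ZMod (q ^ a) // ∑ j ∈ Finset.range p, x ^ j = 0}
      = Nat.card {u : G // u ^ p = 1 ∧ u ≠ 1} := by
    symm
    apply Nat.card_congr
    apply Equiv.ofBijective (f := fun u : {u : G // u ^ p = 1 ∧ u ≠ 1} =>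
      (⟨(u.1 : ZMod (q ^ a)), hsol u.1 u.2.1 u.2.2⟩ :
        {x : ZMod (q ^ a) // ∑ j ∈ Finset.range p, x ^ j = 0}))
    constructor
    · intro u v huv
      exact Subtype.ext (Units.ext (congrArg Subtype.val huv))
    · rintro ⟨x, hx⟩
      have hxp : x ^ p = 1 := by
        have h1 := geom_sum_mul x p
        rw [hx, zero_mul] at h1
        linear_combination -h1
      refine ⟨⟨Units.ofPowEqOne x p hxp hp.ne_zero,
        Units.pow_ofPowEqOne hxp hp.ne_zero, ?_⟩,
        Subtype.ext (Units.val_ofPowEqOne x p hxp hp.ne_zero)⟩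
      intro h1
      have hx1 : x = 1 := by
        have := congrArg Units.val h1
        rwa [Units.val_ofPowEqOne x p hxp hp.ne_zero, Units.val_one] at this
      rw [hx1] at hx
      simp only [one_pow, Finset.sum_const, Finset.card_range, nsmul_eq_mul, mul_one] at hx
      have : q ^ a ∣ p := (ZMod.natCast_eq_zero_iff _ _).mp hx
      have hqdp : q ∣ p := dvd_trans (dvd_pow_self q (by omega)) this
      exact hqp ((Nat.prime_dvd_prime_iff_eq hq hp).mp hqdp)
  -- transfer to (ZMod q)ˣ
  have e2 : Nat.card {u : G // u ^ p = 1 ∧ u ≠ 1}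
      = Nat.card {y : (ZMod q)ˣ // y ^ p = 1 ∧ y ≠ 1} := by
    apply Nat.card_congr
    have hmap : ∀ u : {u : G // u ^ p = 1 ∧ u ≠ 1}, (φ u.1) ^ p = 1 ∧ φ u.1 ≠ 1 := by
      rintro ⟨u, hup, hu1⟩
      constructor
      · rw [← map_pow, hup, map_one]
      · intro hk
        exact hu1 (hkertriv u hk hup)
    apply Equiv.ofBijective (f := fun u : {u : G // u ^ p = 1 ∧ u ≠ 1} =>
      (⟨φ u.1, hmap u⟩ : {y : (ZMod q)ˣ // y ^ p = 1 ∧ y ≠ 1}))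
    constructor
    · rintro ⟨u, hup, hu1⟩ ⟨v, hvp, hv1⟩ huv
      have h1 : φ (u * v⁻¹) = 1 := by
        have := congrArg Subtype.val huv
        simp only at this
        rw [map_mul, map_inv, this, mul_inv_cancel]
      have h2 : (u * v⁻¹) ^ p = 1 := by
        rw [mul_pow, inv_pow, hup, hvp, inv_one, mul_one]
      have h3 := hkertriv _ h1 h2
      exact Subtype.ext (by rwa [mul_inv_eq_one] at h3)
    · rintro ⟨y, hyp, hy1⟩
      obtain ⟨x₀, hx₀⟩ := hsurj y
      have hcop : Nat.Coprime (q ^ (a - 1)) p :=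
        (Nat.Coprime.pow_left (a - 1)
          (((Nat.coprime_primes hq hp).mpr (by exact hqp)))).symm.symm
      obtain ⟨c, -, hc⟩ := Nat.exists_mul_mod_eq_one_of_coprime hcop hp.one_lt
      set k := q ^ (a - 1)
      have hkc : k * c = p * (k * c / p) + 1 := by
        have := Nat.div_add_mod (k * c) p
        omega
      set u := x₀ ^ (k * c) with hu
      have hφu : φ u = y := by
        rw [hu, map_pow, hx₀, hkc, pow_succ, pow_mul, hyp, one_pow, one_mul]
      have hup : u ^ p = 1 := by
        have hker0 : x₀ ^ p ∈ φ.ker := by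
          rw [MonoidHom.mem_ker, map_pow, hx₀, hyp]
        have h1 : (x₀ ^ p) ^ k = 1 := hkerpow _ hker0
        calc u ^ p = ((x₀ ^ p) ^ k) ^ c := by
              rw [hu, ← pow_mul, ← pow_mul, ← pow_mul]
              congr 1
              ring
          _ = 1 := by rw [h1, one_pow]
      have hu1 : u ≠ 1 := by
        intro h1
        rw [h1, map_one] at hφu
        exact hy1 hφu.symm
      exact ⟨⟨u, hup, hu1⟩, Subtype.ext hφu⟩
  -- count in (ZMod q)ˣ
  have e3 : Nat.card {y : (ZMod q)ˣ // y ^ p = 1 ∧ y ≠ 1}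
      = if p ∣ q - 1 then p - 1 else 0 := by
    classical
    have hiff : ∀ y : (ZMod q)ˣ, (y ^ p = 1 ∧ y ≠ 1) ↔ orderOf y = p := by
      intro y
      constructor
      · rintro ⟨h1, h2⟩; exact orderOf_eq_prime h1 h2
      · intro h
        refine ⟨h ▸ pow_orderOf_eq_one y, fun h1 => ?_⟩
        rw [h1, orderOf_one] at h
        exact hp.one_lt.ne' h.symm
    have hcc : Nat.card {y : (ZMod q)ˣ // y ^ p = 1 ∧ y ≠ 1}
        = #{y : (ZMod q)ˣ | orderOf y = p} := by
      rw [Nat.card_eq_fintype_card, Fintype.card_subtype]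
      congr 1
      ext y
      simp [hiff y]
    rw [hcc]
    have hcardu : Fintype.card (ZMod q)ˣ = q - 1 := by
      rw [ZMod.card_units_eq_totient, Nat.totient_prime hq]
    by_cases hdq : p ∣ q - 1
    · rw [if_pos hdq]
      rw [IsCyclic.card_orderOf_eq_totient (by rw [hcardu]; exact hdq), Nat.totient_prime hp]
    · rw [if_neg hdq]
      rw [Finset.card_eq_zero]
      ext y
      simp only [Finset.mem_filter, Finset.mem_univ, true_and, Finset.notMem_empty,
        iff_false]
      intro h
      apply hdq
      rw [← hcardu, ← h]
      exact orderOf_dvd_card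
  rw [e1, e2, e3]

lemma cnt_p_self (p : ℕ) (hp : p.Prime) : cnt p p = 1 := by
  rw [cnt, Nat.card_eq_one_iff_unique]
  refine ⟨⟨fun a b => Subtype.ext ?_⟩, ⟨1, (fS_zero_iff_p p hp 1).mpr rfl⟩⟩
  exact ((fS_zero_iff_p p hp _).mp a.2).trans ((fS_zero_iff_p p hp _).mp b.2).symm

lemma cnt_pp (p a : ℕ) (hp : p.Prime) (hodd : Odd p) (ha : 2 ≤ a) : cnt p (p ^ a) = 0 := by
  rw [cnt]
  haveI : IsEmpty {x : ZMod (p ^ a) // ∑ j ∈ Finset.range p, x ^ j = 0} := by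
    constructor
    rintro ⟨x, hx⟩
    apply no_sol_p_sq p hp hodd (ZMod.castHom (pow_dvd_pow p ha) (ZMod (p ^ 2)) x)
    rw [map_fS' _ p x, hx, map_zero]
  exact Nat.card_of_isEmpty

lemma cnt_q (p q a : ℕ) (hp : p.Prime) (hq : q.Prime) (hqp : q ≠ p) (ha : 1 ≤ a) :
    cnt p (q ^ a) = if p ∣ q - 1 then p - 1 else 0 :=
  cnt_q_aux p q a hp hq hqp ha

/-- Theorem 3.4: for an odd prime `p` and `n = p^{a₀}·p₁^{a₁}⋯p_t^{a_t} ≥ 2`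
(with `p₁, …, p_t` distinct primes different from `p`), the number of integers
`0 < ℓ < n` with `ℓ^{p-1} + ℓ^{p-2} + … + ℓ + 1 ≡ 0 (mod n)` equals `(p-1)^t`
if `a₀ ≤ 1` and `p ∣ pᵢ - 1` for all `i`, and `0` otherwise. -/
theorem count_prime_valent_regular_cayley_maps_dihedral
    (p : ℕ) (hp : p.Prime) (hodd : Odd p)
    (n : ℕ) (hn : 2 ≤ n)
    (t : ℕ) (a₀ : ℕ) (ps as : Fin t → ℕ)
    (hps : ∀ i, (ps i).Prime) (hpsne : ∀ i, ps i ≠ p)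
    (hinj : Function.Injective ps)
    (has : ∀ i, 1 ≤ as i)
    (hfact : n = p ^ a₀ * ∏ i, ps i ^ as i) :
    ((Finset.range n).filter
        (fun ℓ => 0 < ℓ ∧ n ∣ ∑ j ∈ Finset.range p, ℓ ^ j)).card =
      if a₀ ≤ 1 ∧ ∀ i, p ∣ ps i - 1 then (p - 1) ^ t else 0 := by
  haveI : NeZero n := ⟨by omega⟩
  classical
  -- step 1 : drop the positivity condition
  have hfilter : (Finset.range n).filter
        (fun ℓ => 0 < ℓ ∧ n ∣ ∑ j ∈ Finset.range p, ℓ ^ j)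
      = (Finset.range n).filter (fun ℓ => n ∣ ∑ j ∈ Finset.range p, ℓ ^ j) := by
    apply Finset.filter_congr
    intro ℓ _
    constructor
    · exact fun h => h.2
    · intro h
      refine ⟨?_, h⟩
      by_contra hl
      have hl0 : ℓ = 0 := by omega
      subst hl0
      have hsum : ∑ j ∈ Finset.range p, (0 : ℕ) ^ j = 1 := by
        rw [show p = (p - 1) + 1 by have := hp.two_le; omega, Finset.sum_range_succ']
        simp [pow_succ]
      rw [hsum] at h
      have := Nat.le_of_dvd one_pos h
      omega
  -- step 2 : the count equals `cnt p n`
  have hcard : ((Finset.range n).filter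
        (fun ℓ => n ∣ ∑ j ∈ Finset.range p, ℓ ^ j)).card = cnt p n := by
    rw [cnt, Nat.card_eq_fintype_card, Fintype.card_subtype]
    refine Finset.card_bij (fun ℓ _ => ((ℓ : ZMod n))) ?_ ?_ ?_
    · intro ℓ hℓ
      rw [Finset.mem_filter] at hℓ ⊢
      refine ⟨Finset.mem_univ _, ?_⟩
      have : ((∑ j ∈ Finset.range p, ℓ ^ j : ℕ) : ZMod n) = 0 :=
        (ZMod.natCast_eq_zero_iff _ _).mpr hℓ.2
      push_cast at this
      exact this
    · intro ℓ₁ h₁ ℓ₂ h₂ heq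
      have e₁ : ((ℓ₁ : ZMod n)).val = ℓ₁ :=
        ZMod.val_cast_of_lt (Finset.mem_range.mp (Finset.mem_filter.mp h₁).1)
      have e₂ : ((ℓ₂ : ZMod n)).val = ℓ₂ :=
        ZMod.val_cast_of_lt (Finset.mem_range.mp (Finset.mem_filter.mp h₂).1)
      rw [← e₁, ← e₂]
      exact congrArg ZMod.val heq
    · intro x hx
      refine ⟨x.val, ?_, ZMod.natCast_zmod_val x⟩
      rw [Finset.mem_filter]
      refine ⟨Finset.mem_range.mpr (ZMod.val_lt x), ?_⟩
      rw [← ZMod.natCast_eq_zero_iff]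
      have hx0 := (Finset.mem_filter.mp hx).2
      push_cast
      rw [ZMod.natCast_zmod_val x]
      exact hx0
  -- step 3 : multiplicativity
  have hcopi : ∀ i : Fin t, Nat.Coprime p (ps i ^ as i) := by
    intro i
    apply Nat.Coprime.pow_right
    exact (Nat.coprime_primes hp (hps i)).mpr (fun h => (hpsne i) h.symm)
  have hcpn : Nat.Coprime (p ^ a₀) (∏ i, ps i ^ as i) := by
    apply Nat.Coprime.pow_left
    exact Nat.Coprime.prod_right fun i _ => hcopi i
  have hprod : ∀ s : Finset (Fin t),
      cnt p (∏ i ∈ s, ps i ^ as i) = ∏ i ∈ s, cnt p (ps i ^ as i) := by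
    intro s
    induction s using Finset.induction_on with
    | empty => simpa using cnt_one p
    | @insert a s hnotmem ih =>
      rw [Finset.prod_insert hnotmem, Finset.prod_insert hnotmem, cnt_mul, ih]
      apply Nat.Coprime.pow_left
      apply Nat.Coprime.prod_right
      intro i hi
      apply Nat.Coprime.pow_right
      exact (Nat.coprime_primes (hps a) (hps i)).mpr
        (fun h => hnotmem ((hinj h) ▸ hi))
  have hsplit : cnt p n = cnt p (p ^ a₀) * ∏ i, cnt p (ps i ^ as i) := by
    rw [hfact, cnt_mul _ _ _ hcpn, hprod Finset.univ]
  -- step 4 : evaluate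
  rw [hfilter, hcard, hsplit]
  by_cases hcond : a₀ ≤ 1 ∧ ∀ i, p ∣ ps i - 1
  · rw [if_pos hcond]
    obtain ⟨ha0, hdvd⟩ := hcond
    have h0 : cnt p (p ^ a₀) = 1 := by
      interval_cases a₀
      · rw [pow_zero]; exact cnt_one p
      · rw [pow_one]; exact cnt_p_self p hp
    have hi : ∀ i : Fin t, cnt p (ps i ^ as i) = p - 1 := by
      intro i
      rw [cnt_q p (ps i) (as i) hp (hps i) (hpsne i) (has i), if_pos (hdvd i)]
    rw [h0, one_mul]
    rw [Finset.prod_congr rfl (fun i _ => hi i)]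
    simp
  · rw [if_neg hcond]
    by_cases ha0 : a₀ ≤ 1
    · have hex : ∃ i, ¬ p ∣ ps i - 1 := by
        by_contra hall
        push_neg at hall
        exact hcond ⟨ha0, hall⟩
      obtain ⟨i0, hi0⟩ := hex
      have : ∏ i, cnt p (ps i ^ as i) = 0 := by
        apply Finset.prod_eq_zero (Finset.mem_univ i0)
        rw [cnt_q p (ps i0) (as i0) hp (hps i0) (hpsne i0) (has i0), if_neg hi0]
      rw [this, mul_zero]
    · have : cnt p (p ^ a₀) = 0 := cnt_pp p a₀ hp hodd (by omega)
      rw [this, zero_mul]
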